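/- Let f_n, g_n, h_n : ℝ → [0,∞) be sequences of measurable functions such that f_n → 0 pointwise a.e., g_n → g and h_n → h pointwise a.e. for measurable g, h : ℝ → [0,∞). Assume that for every ε > 0 there exists C(ε) > 0 with f_n ≤ ε g_n + C(ε) h_n for all n, that sup_n ∫_ℝ g_n dx < ∞, and that ∫_ℝ h_n dx → ∫_ℝ h dx with ∫_ℝ h dx < ∞. Then ∫_ℝ f_n dx → 0, i.e. f_n → 0 in L¹(ℝ). -/

import Mathlib

open MeasureTheory Filter

private lemma aux_limsup_add_liminf_le (u v : ℕ → ENNReal) :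
    limsup u atTop + liminf v atTop ≤ limsup (fun n => u n + v n) atTop := by
  rw [liminf_eq_iSup_iInf_of_nat, ENNReal.add_iSup]
  refine iSup_le fun n => ?_
  calc limsup u atTop + ⨅ i ≥ n, v i
      = limsup (fun k => u k + ⨅ i ≥ n, v i) atTop := by
        rw [limsup_add_const atTop u _ (by isBoundedDefault) (by isBoundedDefault)]
    _ ≤ limsup (fun n => u n + v n) atTop := by
        refine limsup_le_limsup ?_ (by isBoundedDefault) (by isBoundedDefault)
        filter_upwards [eventually_ge_atTop n] with k hk
        exact add_le_add le_rfl (biInf_le v hk)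

/-- Generalized dominated convergence via Fatou (Lemma 2.5): if `0 ≤ f_n ≤ ε g_n + C(ε) h_n`,
`f_n → 0` a.e., `g_n → g`, `h_n → h` a.e., `sup_n ∫ g_n < ∞` and `∫ h_n → ∫ h`, then
`∫ f_n → 0`, i.e. `f_n → 0` in `L¹(ℝ)`. -/
theorem tendsto_integral_zero_of_fatou
    (f g h : ℕ → ℝ → ℝ) (glim hlim : ℝ → ℝ)
    (hf0 : ∀ n x, 0 ≤ f n x) (hg0 : ∀ n x, 0 ≤ g n x) (hh0 : ∀ n x, 0 ≤ h n x)
    (hfm : ∀ n, Measurable (f n)) (hgm : ∀ n, Measurable (g n)) (hhm : ∀ n, Measurable (h n))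
    (hglimm : Measurable glim) (hhlimm : Measurable hlim)
    (hglim0 : ∀ x, 0 ≤ glim x) (hhlim0 : ∀ x, 0 ≤ hlim x)
    (hfae : ∀ᵐ x : ℝ, Tendsto (fun n => f n x) atTop (nhds 0))
    (hgae : ∀ᵐ x : ℝ, Tendsto (fun n => g n x) atTop (nhds (glim x)))
    (hhae : ∀ᵐ x : ℝ, Tendsto (fun n => h n x) atTop (nhds (hlim x)))
    (hdom : ∀ ε : ℝ, 0 < ε → ∃ C : ℝ, 0 < C ∧ ∀ n x, f n x ≤ ε * g n x + C * h n x)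
    (hgint : ∀ n, Integrable (g n)) (hhint : ∀ n, Integrable (h n))
    (hhlimint : Integrable hlim)
    (hgsup : ∃ M : ℝ, ∀ n, ∫ x, g n x ≤ M)
    (hhconv : Tendsto (fun n => ∫ x, h n x) atTop (nhds (∫ x, hlim x))) :
    Tendsto (fun n => ∫ x, f n x) atTop (nhds 0) := by
  obtain ⟨M, hM⟩ := hgsup
  -- integrability of f n
  have hfint : ∀ n, Integrable (f n) := by
    intro n
    obtain ⟨C₁, hC₁, hle⟩ := hdom 1 one_pos
    refine Integrable.mono' (((hgint n).const_mul 1).add ((hhint n).const_mul C₁))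
      (hfm n).aestronglyMeasurable ?_
    filter_upwards with x
    simp only [Pi.add_apply]
    rw [Real.norm_eq_abs, abs_of_nonneg (hf0 n x)]
    exact hle n x
  -- lintegral versions
  set Fs : ℕ → ENNReal := fun n => ∫⁻ x, ENNReal.ofReal (f n x) with hFs
  set Hs : ℕ → ENNReal := fun n => ∫⁻ x, ENNReal.ofReal (h n x) with hHs
  set LH : ENNReal := ∫⁻ x, ENNReal.ofReal (hlim x) with hLH
  have hFs_eq : ∀ n, Fs n = ENNReal.ofReal (∫ x, f n x) := fun n =>
    (ofReal_integral_eq_lintegral_ofReal (hfint n) (Eventually.of_forall (hf0 n))).symm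
  have hHs_eq : ∀ n, Hs n = ENNReal.ofReal (∫ x, h n x) := fun n =>
    (ofReal_integral_eq_lintegral_ofReal (hhint n) (Eventually.of_forall (hh0 n))).symm
  have hLH_eq : LH = ENNReal.ofReal (∫ x, hlim x) :=
    (ofReal_integral_eq_lintegral_ofReal hhlimint (Eventually.of_forall hhlim0)).symm
  have hLH_ne : LH ≠ ⊤ := by rw [hLH_eq]; exact ENNReal.ofReal_ne_top
  have hHs_tendsto : Tendsto Hs atTop (nhds LH) := by
    rw [hLH_eq]
    exact (ENNReal.tendsto_ofReal hhconv).congr fun n => (hHs_eq n).symm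
  -- key estimate: limsup Fs ≤ ofReal δ for every δ > 0
  set M₀ : ℝ := max M 1 with hM₀
  have hM₀pos : (0:ℝ) < M₀ := lt_of_lt_of_le one_pos (le_max_right _ _)
  have key : ∀ δ : ℝ, 0 < δ → limsup Fs atTop ≤ ENNReal.ofReal δ := by
    intro δ hδ
    set ε : ℝ := δ / M₀ with hε
    have hεpos : 0 < ε := div_pos hδ hM₀pos
    obtain ⟨C, hC, hle⟩ := hdom ε hεpos
    -- A n x = ε g + C h - f ≥ 0
    set A : ℕ → ℝ → ℝ := fun n x => ε * g n x + C * h n x - f n x with hA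
    have hA0 : ∀ n x, 0 ≤ A n x := fun n x => sub_nonneg.2 (hle n x)
    have hAm : ∀ n, Measurable (A n) := fun n =>
      (((hgm n).const_mul ε).add ((hhm n).const_mul C)).sub (hfm n)
    set As : ℕ → ENNReal := fun n => ∫⁻ x, ENNReal.ofReal (A n x) with hAs
    -- (1) Fs n + As n = ∫⁻ ofReal (ε g + C h)
    have hsum : ∀ n, Fs n + As n = ∫⁻ x, ENNReal.ofReal (ε * g n x + C * h n x) := by
      intro n
      rw [hFs, hAs, ← lintegral_add_left ((hfm n).ennreal_ofReal)]
      refine lintegral_congr fun x => ?_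
      rw [← ENNReal.ofReal_add (hf0 n x) (hA0 n x)]
      congr 1
      simp [hA]
    -- (2) Fatou: ofReal C * LH ≤ liminf As
    have hfatou : ENNReal.ofReal C * LH ≤ liminf As atTop := by
      have h1 : ENNReal.ofReal C * LH = ∫⁻ x, ENNReal.ofReal (C * hlim x) := by
        rw [hLH, ← lintegral_const_mul _ hhlimm.ennreal_ofReal]
        exact lintegral_congr fun x =>
          (ENNReal.ofReal_mul hC.le).symm
      rw [h1]
      refine le_trans (lintegral_mono_ae ?_) (lintegral_liminf_le fun n => (hAm n).ennreal_ofReal)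
      filter_upwards [hfae, hgae, hhae] with x hfx hgx hhx
      have hAx : Tendsto (fun n => A n x) atTop (nhds (ε * glim x + C * hlim x)) := by
        have := ((hgx.const_mul ε).add (hhx.const_mul C)).sub hfx
        simpa using this
      have : liminf (fun n => ENNReal.ofReal (A n x)) atTop
          = ENNReal.ofReal (ε * glim x + C * hlim x) :=
        (ENNReal.tendsto_ofReal hAx).liminf_eq
      rw [this]
      refine ENNReal.ofReal_le_ofReal ?_
      nlinarith [hglim0 x, hεpos.le]
    -- (3) limsup of the sum
    have hS_le : ∀ n, Fs n + As n ≤ ENNReal.ofReal (ε * M₀) + ENNReal.ofReal C * Hs n := by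
      intro n
      rw [hsum n]
      have : (∫⁻ x, ENNReal.ofReal (ε * g n x + C * h n x))
          = ENNReal.ofReal ε * (∫⁻ x, ENNReal.ofReal (g n x))
            + ENNReal.ofReal C * Hs n := by
        rw [hHs, ← lintegral_const_mul _ (hgm n).ennreal_ofReal,
          ← lintegral_const_mul _ (hhm n).ennreal_ofReal,
          ← lintegral_add_left (((hgm n).ennreal_ofReal).const_mul _)]
        refine lintegral_congr fun x => ?_
        rw [ENNReal.ofReal_add (mul_nonneg hεpos.le (hg0 n x)) (mul_nonneg hC.le (hh0 n x)),
          ENNReal.ofReal_mul hεpos.le, ENNReal.ofReal_mul hC.le]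
      rw [this]
      gcongr
      have hGn : (∫⁻ x, ENNReal.ofReal (g n x)) = ENNReal.ofReal (∫ x, g n x) :=
        (ofReal_integral_eq_lintegral_ofReal (hgint n) (Eventually.of_forall (hg0 n))).symm
      rw [hGn, ← ENNReal.ofReal_mul hεpos.le]
      refine ENNReal.ofReal_le_ofReal ?_
      have hgM : ∫ x, g n x ≤ M₀ := (hM n).trans (le_max_left _ _)
      exact mul_le_mul_of_nonneg_left hgM hεpos.le
    have hlimsup_sum : limsup (fun n => Fs n + As n) atTop
        ≤ ENNReal.ofReal (ε * M₀) + ENNReal.ofReal C * LH := by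
      have htend : Tendsto (fun n => ENNReal.ofReal (ε * M₀) + ENNReal.ofReal C * Hs n)
          atTop (nhds (ENNReal.ofReal (ε * M₀) + ENNReal.ofReal C * LH)) := by
        refine Tendsto.const_add _ ?_
        exact ENNReal.Tendsto.const_mul hHs_tendsto (Or.inr ENNReal.ofReal_ne_top)
      calc limsup (fun n => Fs n + As n) atTop
          ≤ limsup (fun n => ENNReal.ofReal (ε * M₀) + ENNReal.ofReal C * Hs n) atTop :=
            limsup_le_limsup (Eventually.of_forall hS_le) (by isBoundedDefault)
              (by isBoundedDefault)
        _ = _ := htend.limsup_eq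
    -- combine
    have hchain : limsup Fs atTop + ENNReal.ofReal C * LH
        ≤ ENNReal.ofReal (ε * M₀) + ENNReal.ofReal C * LH := by
      calc limsup Fs atTop + ENNReal.ofReal C * LH
          ≤ limsup Fs atTop + liminf As atTop := by gcongr
        _ ≤ limsup (fun n => Fs n + As n) atTop := aux_limsup_add_liminf_le Fs As
        _ ≤ _ := hlimsup_sum
    have hfin : ENNReal.ofReal C * LH ≠ ⊤ :=
      ENNReal.mul_ne_top ENNReal.ofReal_ne_top hLH_ne
    have : limsup Fs atTop ≤ ENNReal.ofReal (ε * M₀) :=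
      (ENNReal.add_le_add_iff_right hfin).1 hchain
    have hεM : ε * M₀ = δ := div_mul_cancel₀ δ (ne_of_gt hM₀pos)
    rwa [hεM] at this
  -- conclude limsup Fs = 0
  have hlimsup0 : limsup Fs atTop = 0 := by
    refine le_antisymm ?_ zero_le
    refine ENNReal.le_of_forall_pos_le_add fun ε hε _ => ?_
    have := key ε (by exact_mod_cast hε)
    simpa [ENNReal.ofReal_coe_nnreal] using this
  have hliminf0 : liminf Fs atTop = 0 :=
    le_antisymm (hlimsup0 ▸ liminf_le_limsup (by isBoundedDefault) (by isBoundedDefault))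
      zero_le
  have hFs_tendsto : Tendsto Fs atTop (nhds 0) :=
    tendsto_of_liminf_eq_limsup hliminf0 hlimsup0 (by isBoundedDefault) (by isBoundedDefault)
  -- transfer back to real integrals
  have : Tendsto (fun n => (Fs n).toReal) atTop (nhds 0) := by
    have h0 : (0 : ENNReal).toReal = 0 := rfl
    exact h0 ▸ ((ENNReal.tendsto_toReal (by simp)).comp hFs_tendsto)
  refine this.congr fun n => ?_
  rw [hFs_eq n, ENNReal.toReal_ofReal (integral_nonneg (fun x => hf0 n x))]
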